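/- Let d1 > 0, d2 > 0, y⋆ > 0 with d1·d2 < 1/(4·y⋆²), KP ≥ 0, KI > 0, u0 ∈ ℝ, r := (1/2)·√(1 - 4·d1·d2·y⋆²), and let χ̄^s be the maximal-current equilibrium of the PI closed-loop vector field f. Then the coefficients of the characteristic polynomial λ³ + a2·λ² + a1·λ + a0 of the Jacobian ∇f(χ̄^s) are a0 = 2·KI·r, a1 = (1/(4·d1·y⋆²))·(4·d1²·d2·y⋆² + 8·r·KP·y⋆²·d1 + 4·(r - 1/2)²·d1 + 4·KI·y⋆²·(1/2 + r)), a2 = (KP/d1)·(1/2 + r) + d1 + d2, and all three are strictly positive. -/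

import Mathlib

open Polynomial Matrix

noncomputable def bpiEqv3 : (ℝ × ℝ × ℝ) ≃ₗ[ℝ] (Fin 3 → ℝ) where
  toFun v := ![v.1, v.2.1, v.2.2]
  invFun w := (w 0, w 1, w 2)
  map_add' x y := by funext i; fin_cases i <;> simp
  map_smul' c x := by funext i; fin_cases i <;> simp
  left_inv x := by simp
  right_inv w := by funext i; fin_cases i <;> simp

noncomputable def bpiB3 : Module.Basis (Fin 3) ℝ (ℝ × ℝ × ℝ) := Module.Basis.ofEquivFun bpiEqv3

lemma bpi_finsupp_aux (g : Fin 3 → ℝ) (i : Fin 3) :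
    ((Finsupp.linearEquivFunOnFinite ℝ ℝ (Fin 3)).symm g) i = g i := rfl

lemma bpi_toMatrix (T : (ℝ × ℝ × ℝ) →ₗ[ℝ] (ℝ × ℝ × ℝ))
    (c11 c12 c13 c21 c22 c23 c31 c32 c33 : ℝ)
    (hT : ∀ v : ℝ × ℝ × ℝ, T v =
      (c11*v.1 + c12*v.2.1 + c13*v.2.2,
       c21*v.1 + c22*v.2.1 + c23*v.2.2,
       c31*v.1 + c32*v.2.1 + c33*v.2.2)) :
    LinearMap.toMatrix bpiB3 bpiB3 T =
      !![c11,c12,c13; c21,c22,c23; c31,c32,c33] := by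
  ext i j
  fin_cases i <;> fin_cases j <;>
    simp [LinearMap.toMatrix_apply, bpiB3, bpiEqv3, hT, Module.Basis.ofEquivFun, bpi_finsupp_aux]

lemma bpi_charpoly_fin3 (M : Matrix (Fin 3) (Fin 3) ℝ) :
    M.charpoly = X^3 + C (-(M 0 0 + M 1 1 + M 2 2)) * X^2
      + C (M 0 0 * M 1 1 - M 0 1 * M 1 0 + M 0 0 * M 2 2 - M 0 2 * M 2 0
          + M 1 1 * M 2 2 - M 1 2 * M 2 1) * X
      + C (-(M 0 0 * (M 1 1 * M 2 2 - M 1 2 * M 2 1)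
          - M 0 1 * (M 1 0 * M 2 2 - M 1 2 * M 2 0)
          + M 0 2 * (M 1 0 * M 2 1 - M 1 1 * M 2 0))) := by
  rw [Matrix.charpoly, Matrix.det_fin_three]
  simp only [charmatrix_apply_eq, charmatrix_apply_ne _ _ _ (by decide : (0:Fin 3) ≠ 1),
    charmatrix_apply_ne _ _ _ (by decide : (0:Fin 3) ≠ 2),
    charmatrix_apply_ne _ _ _ (by decide : (1:Fin 3) ≠ 0),
    charmatrix_apply_ne _ _ _ (by decide : (1:Fin 3) ≠ 2),
    charmatrix_apply_ne _ _ _ (by decide : (2:Fin 3) ≠ 0),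
    charmatrix_apply_ne _ _ _ (by decide : (2:Fin 3) ≠ 1),
    map_add, _root_.map_mul, map_sub, map_neg]
  ring

lemma bpi_charpoly_coeffs (T : (ℝ × ℝ × ℝ) →ₗ[ℝ] (ℝ × ℝ × ℝ))
    (c11 c12 c13 c21 c22 c23 c31 c32 c33 : ℝ)
    (hT : ∀ v : ℝ × ℝ × ℝ, T v =
      (c11*v.1 + c12*v.2.1 + c13*v.2.2,
       c21*v.1 + c22*v.2.1 + c23*v.2.2,
       c31*v.1 + c32*v.2.1 + c33*v.2.2)) :
    T.charpoly.coeff 0 = -(c11 * (c22 * c33 - c23 * c32)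
        - c12 * (c21 * c33 - c23 * c31) + c13 * (c21 * c32 - c22 * c31)) ∧
    T.charpoly.coeff 1 = c11*c22 - c12*c21 + c11*c33 - c13*c31 + c22*c33 - c23*c32 ∧
    T.charpoly.coeff 2 = -(c11 + c22 + c33) := by
  rw [← LinearMap.charpoly_toMatrix T bpiB3, bpi_toMatrix T _ _ _ _ _ _ _ _ _ hT,
    bpi_charpoly_fin3]
  refine ⟨?_, ?_, ?_⟩ <;>
    simp only [coeff_add, coeff_C_mul, coeff_X_pow, coeff_C, coeff_X] <;> norm_num [Matrix.cons_val_two]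

set_option maxHeartbeats 1000000 in
theorem boost_pi_max_current_charpoly_coeffs
    (d1 d2 ystar KP KI u0 : ℝ) (hd1 : 0 < d1) (hd2 : 0 < d2) (hy : 0 < ystar)
    (hcond : d1 * d2 < 1 / (4 * ystar ^ 2)) (hKP : 0 ≤ KP) (hKI : 0 < KI)
    (r : ℝ) (hr : r = (1 / 2) * Real.sqrt (1 - 4 * d1 * d2 * ystar ^ 2))
    (f : ℝ × ℝ × ℝ → ℝ × ℝ × ℝ)
    (hf : ∀ χ : ℝ × ℝ × ℝ,
      f χ = (-d1 * χ.1 + 1 - (u0 + KI * χ.2.2 + KP * (ystar - χ.2.1)) * χ.2.1,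
             -d2 * χ.2.1 + (u0 + KI * χ.2.2 + KP * (ystar - χ.2.1)) * χ.1,
             ystar - χ.2.1))
    (χs : ℝ × ℝ × ℝ)
    (hχs : χs = ((1 / (2 * d1)) * (1 + 2 * r), ystar,
      (1 - d1 * ((1 / (2 * d1)) * (1 + 2 * r)) - u0 * ystar) / (KI * ystar)))
    (a0 a1 a2 : ℝ)
    (ha0 : a0 = 2 * KI * r)
    (ha1 : a1 = (1 / (4 * d1 * ystar ^ 2)) *
      (4 * d1 ^ 2 * d2 * ystar ^ 2 + 8 * r * KP * ystar ^ 2 * d1 +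
        4 * (r - 1 / 2) ^ 2 * d1 + 4 * KI * ystar ^ 2 * (1 / 2 + r)))
    (ha2 : a2 = (KP / d1) * (1 / 2 + r) + d1 + d2) :
    (LinearMap.charpoly (((fderiv ℝ f χs : ℝ × ℝ × ℝ →L[ℝ] ℝ × ℝ × ℝ) :
        ℝ × ℝ × ℝ →ₗ[ℝ] ℝ × ℝ × ℝ))).coeff 0 = a0 ∧
    (LinearMap.charpoly (((fderiv ℝ f χs : ℝ × ℝ × ℝ →L[ℝ] ℝ × ℝ × ℝ) :
        ℝ × ℝ × ℝ →ₗ[ℝ] ℝ × ℝ × ℝ))).coeff 1 = a1 ∧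
    (LinearMap.charpoly (((fderiv ℝ f χs : ℝ × ℝ × ℝ →L[ℝ] ℝ × ℝ × ℝ) :
        ℝ × ℝ × ℝ →ₗ[ℝ] ℝ × ℝ × ℝ))).coeff 2 = a2 ∧
    0 < a0 ∧ 0 < a1 ∧ 0 < a2 := by
  have hd1' : d1 ≠ 0 := ne_of_gt hd1
  have hy' : ystar ≠ 0 := ne_of_gt hy
  have hKI' : KI ≠ 0 := ne_of_gt hKI
  -- facts about r
  have hs : 0 < 1 - 4 * d1 * d2 * ystar ^ 2 := by
    have h4 : (0:ℝ) < 4 * ystar ^ 2 := by positivity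
    have h5 := mul_lt_mul_of_pos_right hcond h4
    rw [one_div, inv_mul_cancel₀ (ne_of_gt h4)] at h5
    nlinarith
  have hrpos : 0 < r := by
    have h6 : 0 < Real.sqrt (1 - 4 * d1 * d2 * ystar ^ 2) := Real.sqrt_pos.mpr hs
    rw [hr]; linarith
  -- the Jacobian entries
  set xb : ℝ := (1 / (2 * d1)) * (1 + 2 * r) with hxb
  set zb : ℝ := (1 - d1 * ((1 / (2 * d1)) * (1 + 2 * r)) - u0 * ystar) / (KI * ystar) with hzb
  set U : ℝ := u0 + KI * zb + KP * (ystar - ystar) with hU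
  subst hχs
  -- derivative
  have h1 : HasFDerivAt (fun χ : ℝ × ℝ × ℝ => χ.1)
      (ContinuousLinearMap.fst ℝ ℝ (ℝ × ℝ)) (xb, ystar, zb) := hasFDerivAt_fst
  have h2 : HasFDerivAt (fun χ : ℝ × ℝ × ℝ => χ.2.1)
      ((ContinuousLinearMap.fst ℝ ℝ ℝ).comp (ContinuousLinearMap.snd ℝ ℝ (ℝ × ℝ)))
      (xb, ystar, zb) := hasFDerivAt_snd.fst
  have h3 : HasFDerivAt (fun χ : ℝ × ℝ × ℝ => χ.2.2)
      ((ContinuousLinearMap.snd ℝ ℝ ℝ).comp (ContinuousLinearMap.snd ℝ ℝ (ℝ × ℝ)))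
      (xb, ystar, zb) := hasFDerivAt_snd.snd
  have hu : HasFDerivAt (fun χ : ℝ × ℝ × ℝ =>
      u0 + KI * χ.2.2 + KP * (ystar - χ.2.1)) _ (xb, ystar, zb) :=
    ((hasFDerivAt_const u0 _).add (h3.const_mul KI)).add
      (((hasFDerivAt_const ystar _).sub h2).const_mul KP)
  have hg1 : HasFDerivAt (fun χ : ℝ × ℝ × ℝ =>
      -d1 * χ.1 + 1 - (u0 + KI * χ.2.2 + KP * (ystar - χ.2.1)) * χ.2.1) _ (xb, ystar, zb) :=
    ((h1.const_mul (-d1)).add_const 1).sub (hu.mul h2)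
  have hg2 : HasFDerivAt (fun χ : ℝ × ℝ × ℝ =>
      -d2 * χ.2.1 + (u0 + KI * χ.2.2 + KP * (ystar - χ.2.1)) * χ.1) _ (xb, ystar, zb) :=
    (h2.const_mul (-d2)).add (hu.mul h1)
  have hg3 : HasFDerivAt (fun χ : ℝ × ℝ × ℝ => ystar - χ.2.1) _ (xb, ystar, zb) :=
    (hasFDerivAt_const ystar _).sub h2
  have hg : HasFDerivAt f _ (xb, ystar, zb) :=
    (hg1.prodMk (hg2.prodMk hg3)).congr_of_eventuallyEq
      (Filter.Eventually.of_forall fun χ => hf χ)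
  have hDv : ∀ v : ℝ × ℝ × ℝ, fderiv ℝ f (xb, ystar, zb) v =
      ((-d1) * v.1 + (KP * ystar - U) * v.2.1 + (-(KI * ystar)) * v.2.2,
       U * v.1 + (-d2 - KP * xb) * v.2.1 + (KI * xb) * v.2.2,
       0 * v.1 + (-1) * v.2.1 + 0 * v.2.2) := by
    rw [hg.fderiv]
    intro v
    rw [Prod.ext_iff, Prod.ext_iff]
    refine ⟨?_, ⟨?_, ?_⟩⟩ <;> simp [hU] <;> ring
  obtain ⟨hc0, hc1, hc2⟩ := bpi_charpoly_coeffs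
    (((fderiv ℝ f (xb, ystar, zb) : ℝ × ℝ × ℝ →L[ℝ] ℝ × ℝ × ℝ) :
        ℝ × ℝ × ℝ →ₗ[ℝ] ℝ × ℝ × ℝ))
    (-d1) (KP * ystar - U) (-(KI * ystar)) U (-d2 - KP * xb) (KI * xb) 0 (-1) 0
    (fun v => hDv v)
  clear hg hg1 hg2 hg3 hu h1 h2 h3 hDv hf
  clear_value xb zb U
  have hU' : U = (1 - d1 * xb) / ystar := by
    rw [hU, hzb, hxb]
    field_simp
    ring
  refine ⟨?_, ?_, ?_, ?_, ?_, ?_⟩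
  · rw [hc0, ha0, hU', hxb]
    field_simp
    ring
  · rw [hc1, ha1, hU', hxb]
    field_simp
    ring
  · rw [hc2, ha2, hxb]
    field_simp
    ring
  · rw [ha0]; positivity
  · rw [ha1]
    have h1 : 0 < 4 * d1 ^ 2 * d2 * ystar ^ 2 := by positivity
    have h2 : 0 ≤ 8 * r * KP * ystar ^ 2 * d1 := by positivity
    have h3 : 0 ≤ 4 * (r - 1 / 2) ^ 2 * d1 := by positivity
    have h4 : 0 < 4 * KI * ystar ^ 2 * (1 / 2 + r) := by positivity
    have h5 : 0 < 1 / (4 * d1 * ystar ^ 2) := by positivity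
    nlinarith
  · rw [ha2]
    have : 0 ≤ (KP / d1) * (1 / 2 + r) := by positivity
    linarith
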